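/- Let s, t be integers with 2 ≤ s ≤ t. Then λ₁(Ġ^{s−1, t+1}) > λ₁(Ġ^{s, t}), where λ₁ denotes the largest adjacency eigenvalue. Consequently, for n vertices (s + t = n − 2), λ₁(Ġ^{1, n−3}) > λ₁(Ġ^{2, n−4}) > … > λ₁(Ġ^{⌊(n−2)/2⌋, ⌈(n−2)/2⌉}). -/
import Mathlib


/-- The sign matrix of the signed graph `Ġ^{s,t}` on `s + t + 2` vertices:
vertex `0 = u`, vertex `1 = v`, vertices `2, …, s+1` are `u₁, …, u_s`, and vertices
`s+2, …, s+t+1` are `v₁, …, v_t`. -/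
def gstSign (s t : ℕ) (x y : Fin (s + t + 2)) : ℤ :=
  if x = y then 0
  else
    if min x.val y.val = 0 ∧ max x.val y.val = 1 then -1
    else if min x.val y.val = 0 then (if max x.val y.val < s + 2 then 1 else 0)
    else if min x.val y.val = 1 then (if s + 2 ≤ max x.val y.val then 1 else 0)
    else 1

/-- The adjacency matrix of the signed graph `Ġ^{s,t}`, as a real matrix. -/
def gstMat (s t : ℕ) : Matrix (Fin (s + t + 2)) (Fin (s + t + 2)) ℝ :=
  Matrix.of fun x y => (gstSign s t x y : ℝ)

/-- The largest (real) eigenvalue `λ₁` of a real matrix. -/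
noncomputable def lam1 {V : Type*} [Fintype V] (A : Matrix V V ℝ) : ℝ :=
  sSup {μ : ℝ | ∃ x : V → ℝ, x ≠ 0 ∧ A.mulVec x = μ • x}

/-!
STATEMENT 8: Let s, t be integers with 2 ≤ s ≤ t.  Then λ₁(Ġ^{s−1, t+1}) > λ₁(Ġ^{s, t}).
Consequently, for n vertices (s + t = n − 2),
λ₁(Ġ^{1, n−3}) > λ₁(Ġ^{2, n−4}) > … > λ₁(Ġ^{⌊(n−2)/2⌋, ⌈(n−2)/2⌉}),
i.e. λ₁(Ġ^{a, (n−2)−a}) is strictly decreasing for 1 ≤ a ≤ ⌊(n−2)/2⌋.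
-/
open Polynomial in
lemma evset_finite {m : ℕ} (A : Matrix (Fin m) (Fin m) ℝ) :
    {μ : ℝ | ∃ x : Fin m → ℝ, x ≠ 0 ∧ A.mulVec x = μ • x}.Finite := by
  apply Set.Finite.subset (Polynomial.finite_setOf_isRoot (A.charpoly_monic.ne_zero))
  rintro μ ⟨x, hx0, hx⟩
  have hdet : (μ • (1 : Matrix (Fin m) (Fin m) ℝ) - A).det = 0 := by
    rw [← Matrix.exists_mulVec_eq_zero_iff]
    refine ⟨x, hx0, ?_⟩
    rw [Matrix.sub_mulVec, Matrix.smul_mulVec, Matrix.one_mulVec, hx, sub_self]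
  have hmap : (Matrix.charmatrix A).map (Polynomial.evalRingHom μ) =
      μ • (1 : Matrix (Fin m) (Fin m) ℝ) - A := by
    ext i j
    by_cases h : i = j <;>
      simp [h, Matrix.charmatrix_apply, Matrix.one_apply, Matrix.diagonal_apply,
        Matrix.smul_apply]
  show Polynomial.IsRoot _ μ
  have h2 := RingHom.map_det (Polynomial.evalRingHom μ) (Matrix.charmatrix A)
  rw [RingHom.mapMatrix_apply] at h2
  rw [Polynomial.IsRoot, Matrix.charpoly]
  show (Polynomial.evalRingHom μ) (Matrix.charmatrix A).det = 0
  rw [h2, hmap, hdet]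

lemma gstMat_abs_le (s t : ℕ) (i j : Fin (s + t + 2)) : |gstMat s t i j| ≤ 1 := by
  simp only [gstMat, Matrix.of_apply, gstSign]
  split_ifs <;> norm_num

lemma evset_le (s t : ℕ) (μ : ℝ)
    (h : μ ∈ {μ : ℝ | ∃ x : Fin (s+t+2) → ℝ, x ≠ 0 ∧ (gstMat s t).mulVec x = μ • x}) :
    μ ≤ (s + t + 2 : ℝ) := by
  obtain ⟨x, hx0, hx⟩ := h
  obtain ⟨i, -, hi⟩ := Finset.exists_max_image Finset.univ (fun i => |x i|) ⟨0, Finset.mem_univ 0⟩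
  have hxi : 0 < |x i| := by
    rcases Function.ne_iff.mp hx0 with ⟨j, hj⟩
    exact lt_of_lt_of_le (abs_pos.mpr hj) (hi j (Finset.mem_univ j))
  have key : |μ| * |x i| ≤ (s + t + 2 : ℝ) * |x i| := by
    have h1 : μ * x i = ∑ j, gstMat s t i j * x j := by
      have h2 := congrFun hx i
      rw [Matrix.mulVec, dotProduct] at h2
      simp only [Pi.smul_apply, smul_eq_mul] at h2
      rw [← h2]
    calc |μ| * |x i| = |∑ j, gstMat s t i j * x j| := by rw [← abs_mul, h1]
      _ ≤ ∑ j, |gstMat s t i j * x j| := Finset.abs_sum_le_sum_abs _ _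
      _ ≤ ∑ _j : Fin (s+t+2), |x i| := by
          apply Finset.sum_le_sum
          intro j _
          rw [abs_mul]
          calc |gstMat s t i j| * |x j| ≤ 1 * |x i| := by
                apply mul_le_mul (gstMat_abs_le s t i j) (hi j (Finset.mem_univ j))
                  (abs_nonneg _) zero_le_one
            _ = |x i| := one_mul _
      _ = (s + t + 2 : ℝ) * |x i| := by
          rw [Finset.sum_const, Finset.card_univ, Fintype.card_fin]
          ring
  have h3 : |μ| ≤ (s + t + 2 : ℝ) := le_of_mul_le_mul_right key hxi
  exact (le_abs_self μ).trans h3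
lemma sum_ite_val {n : ℕ} (k : Fin n) (f : Fin n → ℝ) :
    ∑ j : Fin n, (if j.val = k.val then f j else 0) = f k := by
  have h : ∀ j : Fin n, (if j.val = k.val then f j else 0) = (if j = k then f j else 0) :=
    fun j => by simp [Fin.val_eq_val]
  rw [Finset.sum_congr rfl (fun j _ => h j)]
  simp

lemma sum_ite_Ico {n : ℕ} (a b : ℕ) (hb : b ≤ n) (c : ℝ) :
    ∑ j : Fin n, (if a ≤ j.val ∧ j.val < b then c else 0) = (b - a : ℕ) * c := by
  rw [Fin.sum_univ_eq_sum_range (fun j => if a ≤ j ∧ j < b then c else 0) n]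
  rw [Finset.sum_ite, Finset.sum_const, Finset.sum_const, smul_zero, add_zero]
  have : Finset.filter (fun j => a ≤ j ∧ j < b) (Finset.range n) = Finset.Ico a b := by
    ext j; simp [Finset.mem_Ico]; omega
  rw [this, Nat.card_Ico]
  simp [nsmul_eq_mul]
lemma gstMat_apply (s t : ℕ) (i j : Fin (s + t + 2)) :
    gstMat s t i j =
      if i.val = j.val then (0 : ℝ)
      else if min i.val j.val = 0 ∧ max i.val j.val = 1 then -1
      else if min i.val j.val = 0 then (if max i.val j.val < s + 2 then 1 else 0)
      else if min i.val j.val = 1 then (if s + 2 ≤ max i.val j.val then 1 else 0)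
      else 1 := by
  have hij : (i = j) ↔ (i.val = j.val) := Fin.ext_iff
  simp only [gstMat, Matrix.of_apply, gstSign, hij]
  split_ifs <;> norm_num
/-- The sum of `x` over the `u`-class `{2, …, s+1}`. -/
noncomputable def Csum (s t : ℕ) (x : Fin (s + t + 2) → ℝ) : ℝ :=
  ∑ j : Fin (s + t + 2), (if 2 ≤ j.val ∧ j.val < s + 2 then x j else 0)

/-- The sum of `x` over the `v`-class `{s+2, …, s+t+1}`. -/
noncomputable def Dsum (s t : ℕ) (x : Fin (s + t + 2) → ℝ) : ℝ :=
  ∑ j : Fin (s + t + 2), (if s + 2 ≤ j.val ∧ j.val < s + t + 2 then x j else 0)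

lemma gst_mulVec (s t : ℕ) (x : Fin (s + t + 2) → ℝ) (i : Fin (s + t + 2)) :
    (gstMat s t).mulVec x i =
      if i.val = 0 then -(x 1) + Csum s t x
      else if i.val = 1 then -(x 0) + Dsum s t x
      else if i.val < s + 2 then x 0 + Csum s t x + Dsum s t x - x i
      else x 1 + Csum s t x + Dsum s t x - x i := by
  have h0v : (0 : Fin (s + t + 2)).val = 0 := rfl
  have h1v : (1 : Fin (s + t + 2)).val = 1 := rfl
  rw [Matrix.mulVec, dotProduct]
  by_cases h0 : i.val = 0
  · have hterm : ∀ j : Fin (s + t + 2), gstMat s t i j * x j =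
        (if j.val = (1 : Fin (s+t+2)).val then -(x j) else 0)
          + (if 2 ≤ j.val ∧ j.val < s + 2 then x j else 0) := by
      intro j
      rw [gstMat_apply, h1v]
      have hj := j.isLt
      split_ifs <;> first | ring1 | (exfalso; omega)
    rw [Finset.sum_congr rfl fun j _ => hterm j, Finset.sum_add_distrib, sum_ite_val]
    simp only [if_pos h0, Csum]
  by_cases h1 : i.val = 1
  · have hterm : ∀ j : Fin (s + t + 2), gstMat s t i j * x j =
        (if j.val = (0 : Fin (s+t+2)).val then -(x j) else 0)
          + (if s + 2 ≤ j.val ∧ j.val < s + t + 2 then x j else 0) := by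
      intro j
      rw [gstMat_apply, h0v]
      have hj := j.isLt
      split_ifs <;> first | ring1 | (exfalso; omega)
    rw [Finset.sum_congr rfl fun j _ => hterm j, Finset.sum_add_distrib, sum_ite_val]
    simp only [if_neg h0, if_pos h1, Dsum]
  by_cases h2 : i.val < s + 2
  · have hterm : ∀ j : Fin (s + t + 2), gstMat s t i j * x j =
        (if j.val = (0 : Fin (s+t+2)).val then x j else 0)
          + (if 2 ≤ j.val ∧ j.val < s + 2 then x j else 0)
          + (if s + 2 ≤ j.val ∧ j.val < s + t + 2 then x j else 0)
          + (if j.val = i.val then -(x j) else 0) := by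
      intro j
      rw [gstMat_apply, h0v]
      have hj := j.isLt
      split_ifs <;> first | ring1 | (exfalso; omega)
    rw [Finset.sum_congr rfl fun j _ => hterm j, Finset.sum_add_distrib,
      Finset.sum_add_distrib, Finset.sum_add_distrib, sum_ite_val, sum_ite_val]
    simp only [if_neg h0, if_neg h1, if_pos h2, Csum, Dsum]
    ring
  · have hterm : ∀ j : Fin (s + t + 2), gstMat s t i j * x j =
        (if j.val = (1 : Fin (s+t+2)).val then x j else 0)
          + (if 2 ≤ j.val ∧ j.val < s + 2 then x j else 0)
          + (if s + 2 ≤ j.val ∧ j.val < s + t + 2 then x j else 0)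
          + (if j.val = i.val then -(x j) else 0) := by
      intro j
      rw [gstMat_apply, h1v]
      have hj := j.isLt
      split_ifs <;> first | ring1 | (exfalso; omega)
    rw [Finset.sum_congr rfl fun j _ => hterm j, Finset.sum_add_distrib,
      Finset.sum_add_distrib, Finset.sum_add_distrib, sum_ite_val, sum_ite_val]
    simp only [if_neg h0, if_neg h1, if_neg h2, Csum, Dsum]
    ring
/-- The quartic whose largest root is `λ₁(Ġ^{s,t})`. -/
noncomputable def Fq (s t l : ℝ) : ℝ :=
  (l^2 - (s-1)*l - 2*s) * (l^2 - (t-1)*l - 2*t) - (s-1)*(t-1)*(l+1)^2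

noncomputable def cval (t l : ℝ) : ℝ := (t-1)*(l+1)
noncomputable def dval (s l : ℝ) : ℝ := l^2 - (s-1)*l - 2*s
noncomputable def aval (s t l : ℝ) : ℝ := (l - s + 1) * cval t l - t * dval s l
noncomputable def bval (s t l : ℝ) : ℝ := (l - t + 1) * dval s l - s * cval t l

lemma root_mem_evset (s t : ℕ) (hs : 1 ≤ s) (ht : 2 ≤ t) (l : ℝ) (hl : -1 < l) (hF : Fq s t l = 0) :
    l ∈ {μ : ℝ | ∃ x : Fin (s+t+2) → ℝ, x ≠ 0 ∧ (gstMat s t).mulVec x = μ • x} := by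
  have h0v : (0 : Fin (s + t + 2)).val = 0 := rfl
  have h1v : (1 : Fin (s + t + 2)).val = 1 := rfl
  have ht' : (2:ℝ) ≤ (t:ℝ) := by exact_mod_cast ht
  set x : Fin (s+t+2) → ℝ := fun j =>
    if j.val = 0 then aval s t l else if j.val = 1 then bval s t l
    else if j.val < s + 2 then cval t l else dval s l with hxdef
  have hcne : cval t l ≠ 0 := by
    simp only [cval]
    have h1 : (0:ℝ) < (t:ℝ) - 1 := by linarith
    have h2 : (0:ℝ) < l + 1 := by linarith
    positivity
  refine ⟨x, ?_, ?_⟩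
  · intro h
    have h2 := congrFun h ⟨2, by omega⟩
    simp only [hxdef] at h2
    norm_num at h2
    rw [if_pos (show 0 < s by omega)] at h2
    exact hcne h2
  · funext i
    have hx0 : x 0 = aval s t l := by simp only [hxdef, h0v]; norm_num
    have hx1 : x 1 = bval s t l := by simp only [hxdef, h1v]; norm_num
    have hC : Csum s t x = (s:ℝ) * cval t l := by
      have hcongr : ∀ j : Fin (s+t+2), (if 2 ≤ j.val ∧ j.val < s + 2 then x j else 0)
          = (if 2 ≤ j.val ∧ j.val < s + 2 then cval t l else 0) := by
        intro j
        by_cases h : 2 ≤ j.val ∧ j.val < s + 2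
        · rw [if_pos h, if_pos h]
          simp only [hxdef]
          rw [if_neg (by omega), if_neg (by omega), if_pos h.2]
        · rw [if_neg h, if_neg h]
      rw [Csum, Finset.sum_congr rfl fun j _ => hcongr j, sum_ite_Ico 2 (s+2) (by omega)]
      norm_num
    have hD : Dsum s t x = (t:ℝ) * dval s l := by
      have hcongr : ∀ j : Fin (s+t+2), (if s + 2 ≤ j.val ∧ j.val < s + t + 2 then x j else 0)
          = (if s + 2 ≤ j.val ∧ j.val < s + t + 2 then dval s l else 0) := by
        intro j
        by_cases h : s + 2 ≤ j.val ∧ j.val < s + t + 2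
        · rw [if_pos h, if_pos h]
          simp only [hxdef]
          rw [if_neg (by omega), if_neg (by omega), if_neg (by omega)]
        · rw [if_neg h, if_neg h]
      rw [Dsum, Finset.sum_congr rfl fun j _ => hcongr j, sum_ite_Ico (s+2) (s+t+2) le_rfl]
      rw [show s + t + 2 - (s+2) = t by omega]
    rw [gst_mulVec]
    have hsmul : (l • x) i = l * x i := rfl
    by_cases H0 : i.val = 0
    · have hxi : x i = aval s t l := by simp only [hxdef]; rw [if_pos H0]
      rw [if_pos H0, hsmul, hxi, hx1, hC]
      simp only [aval, bval, cval, dval]; ring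
    by_cases H1 : i.val = 1
    · have hxi : x i = bval s t l := by simp only [hxdef]; rw [if_neg H0, if_pos H1]
      rw [if_neg H0, if_pos H1, hsmul, hxi, hx0, hD]
      simp only [Fq] at hF
      simp only [aval, bval, cval, dval]
      linear_combination -hF
    by_cases H2 : i.val < s + 2
    · have hxi : x i = cval t l := by simp only [hxdef]; rw [if_neg H0, if_neg H1, if_pos H2]
      rw [if_neg H0, if_neg H1, if_pos H2, hsmul, hxi, hx0, hC, hD]
      simp only [aval, bval, cval, dval]; ring
    · have hxi : x i = dval s l := by simp only [hxdef]; rw [if_neg H0, if_neg H1, if_neg H2]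
      rw [if_neg H0, if_neg H1, if_neg H2, hsmul, hxi, hx1, hC, hD]
      simp only [aval, bval, cval, dval]; ring
lemma evset_root (s t : ℕ) (hs : 2 ≤ s) (ht : 2 ≤ t) (μ : ℝ) (hμ : μ ≠ -1)
    (h : μ ∈ {μ : ℝ | ∃ x : Fin (s+t+2) → ℝ, x ≠ 0 ∧ (gstMat s t).mulVec x = μ • x}) :
    Fq s t μ = 0 := by
  obtain ⟨x, hx0, hx⟩ := h
  have h0v : (0 : Fin (s + t + 2)).val = 0 := rfl
  have h1v : (1 : Fin (s + t + 2)).val = 1 := rfl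
  have hs' : (2:ℝ) ≤ (s:ℝ) := by exact_mod_cast hs
  have ht' : (2:ℝ) ≤ (t:ℝ) := by exact_mod_cast ht
  have hμ1 : μ + 1 ≠ 0 := fun h => hμ (by linarith)
  have hmv : ∀ i : Fin (s+t+2),
      (if i.val = 0 then -(x 1) + Csum s t x
      else if i.val = 1 then -(x 0) + Dsum s t x
      else if i.val < s + 2 then x 0 + Csum s t x + Dsum s t x - x i
      else x 1 + Csum s t x + Dsum s t x - x i) = μ * x i := by
    intro i
    have h2 := congrFun hx i
    rw [gst_mulVec] at h2
    exact h2
  have e1 : -(x 1) + Csum s t x = μ * x 0 := by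
    have := hmv 0; rwa [if_pos h0v] at this
  have e2 : -(x 0) + Dsum s t x = μ * x 1 := by
    have := hmv 1; rwa [if_neg (by rw [h1v]; omega), if_pos h1v] at this
  have hmvu : ∀ i : Fin (s+t+2), 2 ≤ i.val → i.val < s + 2 →
      x 0 + Csum s t x + Dsum s t x - x i = μ * x i := by
    intro i hi2 hi3
    have := hmv i; rwa [if_neg (by omega), if_neg (by omega), if_pos hi3] at this
  have hmvv : ∀ i : Fin (s+t+2), s + 2 ≤ i.val →
      x 1 + Csum s t x + Dsum s t x - x i = μ * x i := by
    intro i hi2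
    have := hmv i; rwa [if_neg (by omega), if_neg (by omega), if_neg (by omega)] at this
  set i2 : Fin (s+t+2) := ⟨2, by omega⟩ with hi2def
  set iv : Fin (s+t+2) := ⟨s+2, by omega⟩ with hivdef
  have hi2v : i2.val = 2 := rfl
  have hivv : iv.val = s + 2 := rfl
  have hcu : ∀ i : Fin (s+t+2), 2 ≤ i.val → i.val < s + 2 → x i = x i2 := by
    intro i hA hB
    have ha := hmvu i hA hB
    have hb := hmvu i2 (by omega) (by omega)
    have : (μ + 1) * x i = (μ + 1) * x i2 := by linear_combination hb - ha
    exact mul_left_cancel₀ hμ1 this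
  have hdu : ∀ i : Fin (s+t+2), s + 2 ≤ i.val → x i = x iv := by
    intro i hA
    have ha := hmvv i hA
    have hb := hmvv iv (by omega)
    have : (μ + 1) * x i = (μ + 1) * x iv := by linear_combination hb - ha
    exact mul_left_cancel₀ hμ1 this
  have hC : Csum s t x = (s:ℝ) * x i2 := by
    have hcongr : ∀ j : Fin (s+t+2), (if 2 ≤ j.val ∧ j.val < s + 2 then x j else 0)
        = (if 2 ≤ j.val ∧ j.val < s + 2 then x i2 else 0) := by
      intro j
      by_cases h : 2 ≤ j.val ∧ j.val < s + 2
      · rw [if_pos h, if_pos h, hcu j h.1 h.2]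
      · rw [if_neg h, if_neg h]
    rw [Csum, Finset.sum_congr rfl fun j _ => hcongr j, sum_ite_Ico 2 (s+2) (by omega)]
    norm_num
  have hD : Dsum s t x = (t:ℝ) * x iv := by
    have hcongr : ∀ j : Fin (s+t+2), (if s + 2 ≤ j.val ∧ j.val < s + t + 2 then x j else 0)
        = (if s + 2 ≤ j.val ∧ j.val < s + t + 2 then x iv else 0) := by
      intro j
      by_cases h : s + 2 ≤ j.val ∧ j.val < s + t + 2
      · rw [if_pos h, if_pos h, hdu j h.1]
      · rw [if_neg h, if_neg h]
    rw [Dsum, Finset.sum_congr rfl fun j _ => hcongr j, sum_ite_Ico (s+2) (s+t+2) le_rfl]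
    rw [show s + t + 2 - (s+2) = t by omega]
  rw [hC] at e1
  rw [hD] at e2
  have e3 : x 0 + (s:ℝ) * x i2 + (t:ℝ) * x iv - x i2 = μ * x i2 := by
    have := hmvu i2 (by omega) (by omega); rwa [hC, hD] at this
  have e4 : x 1 + (s:ℝ) * x i2 + (t:ℝ) * x iv - x iv = μ * x iv := by
    have := hmvv iv (by omega); rwa [hC, hD] at this
  have h5 : (μ^2 - ((s:ℝ)-1)*μ - 2*s) * x i2 = ((t:ℝ)-1)*(μ+1) * x iv := by
    linear_combination -μ * e3 - e1 - e4
  have h6 : (μ^2 - ((t:ℝ)-1)*μ - 2*t) * x iv = ((s:ℝ)-1)*(μ+1) * x i2 := by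
    linear_combination -μ * e4 - e2 - e3
  have key : Fq (s:ℝ) (t:ℝ) μ * (x i2 * x iv) = 0 := by
    simp only [Fq]
    linear_combination ((μ^2 - ((t:ℝ)-1)*μ - 2*t) * x iv) * h5
      + (((t:ℝ)-1)*(μ+1) * x iv) * h6
  rcases mul_eq_zero.mp key with hk | hk
  · exact hk
  exfalso
  have hcd : x i2 = 0 ∧ x iv = 0 := by
    rcases mul_eq_zero.mp hk with hc0 | hd0
    · refine ⟨hc0, ?_⟩
      have h7 : ((t:ℝ)-1)*(μ+1) * x iv = 0 := by rw [← h5, hc0, mul_zero]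
      rcases mul_eq_zero.mp h7 with h8 | h8
      · exact absurd h8 (mul_ne_zero (by linarith) hμ1)
      · exact h8
    · refine ⟨?_, hd0⟩
      have h7 : ((s:ℝ)-1)*(μ+1) * x i2 = 0 := by rw [← h6, hd0, mul_zero]
      rcases mul_eq_zero.mp h7 with h8 | h8
      · exact absurd h8 (mul_ne_zero (by linarith) hμ1)
      · exact h8
  obtain ⟨hc0, hd0⟩ := hcd
  have ha0 : x 0 = 0 := by rw [hc0, hd0] at e3; linarith [e3]
  have hb0 : x 1 = 0 := by rw [hc0, hd0] at e4; linarith [e4]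
  apply hx0
  funext i
  by_cases H0 : i.val = 0
  · have : i = 0 := Fin.ext (by rw [h0v, H0])
    rw [this, ha0]; rfl
  by_cases H1 : i.val = 1
  · have : i = 1 := Fin.ext (by rw [h1v, H1])
    rw [this, hb0]; rfl
  by_cases H2 : i.val < s + 2
  · rw [hcu i (by omega) H2, hc0]; rfl
  · rw [hdu i (by omega), hd0]; rfl
lemma Fq_neg_at (s t : ℕ) (hs : 2 ≤ s) (ht : 2 ≤ t) : Fq s t ((s:ℝ)+(t:ℝ)-1) < 0 := by
  have hs' : (2:ℝ) ≤ (s:ℝ) := by exact_mod_cast hs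
  have ht' : (2:ℝ) ≤ (t:ℝ) := by exact_mod_cast ht
  have hs0 : (0:ℝ) < s := by linarith
  have ht0 : (0:ℝ) < t := by linarith
  have A : (s:ℝ)^2 ≤ (s:ℝ)^2*((s:ℝ)-1) := by nlinarith [sq_nonneg (s:ℝ)]
  have B : (t:ℝ)^2 ≤ (t:ℝ)^2*((t:ℝ)-1) := by nlinarith [sq_nonneg (t:ℝ)]
  have C : (s:ℝ)*t ≤ (s:ℝ)*t*((s:ℝ)+t-3) := by nlinarith [mul_pos hs0 ht0]
  simp only [Fq]
  nlinarith [A, B, C, mul_pos hs0 ht0, sq_nonneg ((s:ℝ)+t)]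

lemma Fq_pos_ge (s t : ℕ) (hs : 1 ≤ s) (ht : 1 ≤ t) (l : ℝ)
    (hl : (s:ℝ)+(t:ℝ)+2 ≤ l) : 0 < Fq s t l := by
  have hs' : (1:ℝ) ≤ (s:ℝ) := by exact_mod_cast hs
  have ht' : (1:ℝ) ≤ (t:ℝ) := by exact_mod_cast ht
  have hl1 : (0:ℝ) < l + 1 := by linarith
  have hd : (0:ℝ) ≤ l - ((s:ℝ)+t+2) := by linarith
  have hP : ((t:ℝ)-1)*(l+1) < l^2 - ((s:ℝ)-1)*l - 2*s := by
    nlinarith [mul_nonneg hd (show (0:ℝ) ≤ l + 4 by linarith)]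
  have hQ : ((s:ℝ)-1)*(l+1) < l^2 - ((t:ℝ)-1)*l - 2*t := by
    nlinarith [mul_nonneg hd (show (0:ℝ) ≤ l + 4 by linarith)]
  have hPn : (0:ℝ) ≤ ((t:ℝ)-1)*(l+1) := mul_nonneg (by linarith) (by linarith)
  have hQn : (0:ℝ) ≤ ((s:ℝ)-1)*(l+1) := mul_nonneg (by linarith) (by linarith)
  have key := mul_lt_mul'' hP hQ hPn hQn
  simp only [Fq]
  nlinarith [key]

lemma part1 (s t : ℕ) (hs : 2 ≤ s) (hst : s ≤ t) :
    lam1 (gstMat s t) < lam1 (gstMat (s - 1) (t + 1)) := by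
  have ht : 2 ≤ t := hs.trans hst
  have hs' : (2:ℝ) ≤ (s:ℝ) := by exact_mod_cast hs
  have ht' : (2:ℝ) ≤ (t:ℝ) := by exact_mod_cast ht
  have hst' : (s:ℝ) ≤ (t:ℝ) := by exact_mod_cast hst
  have hcont : Continuous (fun l => Fq (s:ℝ) (t:ℝ) l) := by
    simp only [Fq]; fun_prop
  have hneg : Fq s t ((s:ℝ)+(t:ℝ)-1) < 0 := Fq_neg_at s t hs ht
  have hpos : 0 < Fq s t ((s:ℝ)+(t:ℝ)+2) := by
    exact Fq_pos_ge s t (by omega) (by omega) _ le_rfl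
  obtain ⟨ρ, hρIoo, hρ0⟩ := intermediate_value_Ioo
    (show (s:ℝ)+(t:ℝ)-1 ≤ (s:ℝ)+(t:ℝ)+2 by linarith) hcont.continuousOn
    (show (0:ℝ) ∈ Set.Ioo (Fq s t ((s:ℝ)+(t:ℝ)-1)) (Fq s t ((s:ℝ)+(t:ℝ)+2)) from ⟨hneg, hpos⟩)
  have hρS : ρ ∈ {μ : ℝ | ∃ x : Fin (s+t+2) → ℝ, x ≠ 0 ∧ (gstMat s t).mulVec x = μ • x} :=
    root_mem_evset s t (by omega) (by omega) ρ (by have := hρIoo.1; linarith) hρ0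
  have hbdd := (evset_finite (gstMat s t)).bddAbove
  have hlam : lam1 (gstMat s t)
      = sSup {μ : ℝ | ∃ x : Fin (s+t+2) → ℝ, x ≠ 0 ∧ (gstMat s t).mulVec x = μ • x} := rfl
  set L := lam1 (gstMat s t) with hLdef
  have hne : Set.Nonempty {μ : ℝ | ∃ x : Fin (s+t+2) → ℝ, x ≠ 0 ∧ (gstMat s t).mulVec x = μ • x} :=
    ⟨ρ, hρS⟩
  have hLρ : ρ ≤ L := by rw [hlam]; exact le_csSup hbdd hρS
  have hLmem : L ∈ {μ : ℝ | ∃ x : Fin (s+t+2) → ℝ, x ≠ 0 ∧ (gstMat s t).mulVec x = μ • x} := by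
    rw [hlam]; exact hne.csSup_mem (evset_finite _)
  have hLgt : (s:ℝ)+(t:ℝ)-1 < L := lt_of_lt_of_le hρIoo.1 hLρ
  have hLle : L ≤ (s:ℝ)+(t:ℝ)+2 := by
    rw [hlam]; exact csSup_le hne (fun μ hμ => by have := evset_le s t μ hμ; push_cast at this ⊢; linarith)
  have hFL : Fq s t L = 0 :=
    evset_root s t hs ht L (by intro h; rw [h] at hLgt; linarith) hLmem
  -- the second graph
  have hs1c : ((s-1 : ℕ):ℝ) = (s:ℝ) - 1 := by
    push_cast [Nat.cast_sub (show 1 ≤ s by omega)]; ring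
  have ht1c : ((t+1 : ℕ):ℝ) = (t:ℝ) + 1 := by push_cast; ring
  have hFL' : Fq ((s-1 : ℕ):ℝ) ((t+1 : ℕ):ℝ) L < 0 := by
    rw [hs1c, ht1c]
    have hdiff : Fq ((s:ℝ)-1) ((t:ℝ)+1) L
        = Fq (s:ℝ) (t:ℝ) L + ((s:ℝ)-(t:ℝ)-1)*(2*L+3) := by simp only [Fq]; ring
    rw [hdiff, hFL, zero_add]
    nlinarith [hLgt]
  have hpos' : 0 < Fq ((s-1 : ℕ):ℝ) ((t+1 : ℕ):ℝ) ((s:ℝ)+(t:ℝ)+3) :=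
    Fq_pos_ge (s-1) (t+1) (by omega) (by omega) _ (by rw [hs1c, ht1c]; linarith)
  have hcont' : Continuous (fun l => Fq ((s-1 : ℕ):ℝ) ((t+1 : ℕ):ℝ) l) := by
    simp only [Fq]; fun_prop
  obtain ⟨ρ', hρ'Ioo, hρ'0⟩ := intermediate_value_Ioo
    (show L ≤ (s:ℝ)+(t:ℝ)+3 by linarith) hcont'.continuousOn
    (show (0:ℝ) ∈ Set.Ioo (Fq ((s-1 : ℕ):ℝ) ((t+1 : ℕ):ℝ) L)
      (Fq ((s-1 : ℕ):ℝ) ((t+1 : ℕ):ℝ) ((s:ℝ)+(t:ℝ)+3)) from ⟨hFL', hpos'⟩)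
  have hρ'S : ρ' ∈ {μ : ℝ | ∃ x : Fin ((s-1)+(t+1)+2) → ℝ, x ≠ 0 ∧
      (gstMat (s-1) (t+1)).mulVec x = μ • x} :=
    root_mem_evset (s-1) (t+1) (by omega) (by omega) ρ'
      (by have := hρ'Ioo.1; linarith) hρ'0
  have hfinal : ρ' ≤ lam1 (gstMat (s-1) (t+1)) :=
    le_csSup (evset_finite (gstMat (s-1) (t+1))).bddAbove hρ'S
  exact lt_of_lt_of_le hρ'Ioo.1 hfinal
lemma step2 (n k : ℕ) (hk : 1 ≤ k) (h2 : 2 * (k + 1) ≤ n - 2) :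
    lam1 (gstMat (k+1) (n - 2 - (k+1))) < lam1 (gstMat k (n - 2 - k)) := by
  have h := part1 (k+1) (n - 2 - (k+1)) (by omega) (by omega)
  rwa [show k + 1 - 1 = k from rfl, show n - 2 - (k+1) + 1 = n - 2 - k by omega] at h

theorem lam1_gst_strict_mono :
    (∀ s t : ℕ, 2 ≤ s → s ≤ t → lam1 (gstMat s t) < lam1 (gstMat (s - 1) (t + 1))) ∧
      ∀ n a b : ℕ, 1 ≤ a → a < b → 2 * b ≤ n - 2 →
        lam1 (gstMat b (n - 2 - b)) < lam1 (gstMat a (n - 2 - a)) := by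
  constructor
  · exact part1
  · intro n a b ha hab h2b
    induction b with
    | zero => omega
    | succ m ih =>
      by_cases hm : a = m
      · subst hm
        exact step2 n a ha h2b
      · have h1 : a < m := by omega
        have h2 : 2 * m ≤ n - 2 := by omega
        exact (step2 n m (by omega) h2b).trans (ih h1 h2)
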